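/- Suppose K, U, S satisfy the local error bound LEB: there are V ⊆ ℝⁿ and ω > 0 with dist(x, S(x)) ≥ ω · dist(x, K ∩ U) for all x ∈ U ∩ V. Then for all x ∈ U ∩ V, (1 − ω²)·dist(x, K ∩ U)² ≥ dist(T^S(x), K ∩ U)². -/

import Mathlib

open Filter Topology
open scoped RealInnerProductSpace

lemma my_varineq {E : Type*} [NormedAddCommGroup E] [InnerProductSpace ℝ E]
    {s : Set E} (hs : Convex ℝ s) {x p : E} (hp : p ∈ s)
    (hmin : ∀ w ∈ s, dist x p ≤ dist x w) : ∀ w ∈ s, ⟪x - p, w - p⟫ ≤ 0 := by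
  rw [← norm_eq_iInf_iff_real_inner_le_zero hs hp]
  haveI : Nonempty s := ⟨⟨p, hp⟩⟩
  refine le_antisymm (le_ciInf fun w => ?_) (ciInf_le (⟨0, fun _ ⟨_, h⟩ => h ▸ norm_nonneg _⟩ : BddBelow (Set.range fun w : s => ‖x - (w : E)‖)) ⟨p, hp⟩)
  simpa [dist_eq_norm] using hmin w w.2

theorem stmt_13 {n : ℕ} (K U : Set (EuclideanSpace ℝ (Fin n)))
    (hKcl : IsClosed K) (hKcv : Convex ℝ K)
    (hU : ∃ (Q : EuclideanSpace ℝ (Fin n) →ₗ[ℝ] EuclideanSpace ℝ (Fin n))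
      (b : EuclideanSpace ℝ (Fin n)), U = {x | Q x = b})
    (hKU : (K ∩ U).Nonempty)
    (S : EuclideanSpace ℝ (Fin n) → Set (EuclideanSpace ℝ (Fin n)))
    (hA1 : ∀ x, IsClosed (S x) ∧ Convex ℝ (S x))
    (hA2 : ∀ x, K ⊆ S x)
    (hA3 : ∀ (z : ℕ → EuclideanSpace ℝ (Fin n)) (zstar : EuclideanSpace ℝ (Fin n)),
      Tendsto z atTop (𝓝 zstar) →
      Tendsto (fun k => Metric.infDist (z k) (S (z k))) atTop (𝓝 0) → zstar ∈ K)
    (PS PU : EuclideanSpace ℝ (Fin n) → EuclideanSpace ℝ (Fin n))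
    (hPS : ∀ y, PS y ∈ S y ∧ ∀ w ∈ S y, dist y (PS y) ≤ dist y w)
    (hPU : ∀ y, PU y ∈ U ∧ ∀ w ∈ U, dist y (PU y) ≤ dist y w)
    (V : Set (EuclideanSpace ℝ (Fin n))) (ω : ℝ) (hω : 0 < ω)
    (hLEB : ∀ x ∈ U ∩ V, Metric.infDist x (S x) ≥ ω * Metric.infDist x (K ∩ U)) :
    ∀ x ∈ U ∩ V,
      (1 - ω ^ 2) * Metric.infDist x (K ∩ U) ^ 2 ≥
        Metric.infDist (PU (PS x)) (K ∩ U) ^ 2 := by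
  intro x hx
  obtain ⟨Q, b, hUeq⟩ := hU
  have hUcv : Convex ℝ U := by
    rw [hUeq]
    exact fun a ha c hc s t hs ht hst => by
      simp only [Set.mem_setOf_eq] at *
      simp [map_add, map_smul, ha, hc, ← add_smul, hst]
  have hUcl : IsClosed U := by
    rw [hUeq]
    exact isClosed_singleton.preimage (LinearMap.continuous_of_finiteDimensional Q)
  have hKUcl : IsClosed (K ∩ U) := hKcl.inter hUcl
  -- projection point z of x onto K ∩ U
  obtain ⟨z, hzKU, hzd⟩ := hKUcl.exists_infDist_eq_dist hKU x
  have hzK : z ∈ K := hzKU.1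
  have hzU : z ∈ U := hzKU.2
  have hzSx : z ∈ S x := hA2 x hzK
  set p := PS x with hp
  set q := PU p with hq
  have hSx := hA1 x
  have hPSx := hPS x
  have hPUp := hPU p
  -- dist x (S x) = ‖x - p‖
  have hdSx : Metric.infDist x (S x) = ‖x - p‖ := by
    refine le_antisymm ?_ ?_
    · simpa [dist_eq_norm] using Metric.infDist_le_dist_of_mem hPSx.1
    · haveI : Nonempty (S x) := ⟨⟨p, hPSx.1⟩⟩
      rw [Metric.infDist_eq_iInf]
      refine le_ciInf fun w => ?_
      simpa [dist_eq_norm] using hPSx.2 w w.2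
  -- variational inequalities
  have hvi1 : ⟪x - p, z - p⟫ ≤ 0 := my_varineq hSx.2 hPSx.1 hPSx.2 z hzSx
  have hvi2 : ⟪p - q, z - q⟫ ≤ 0 := my_varineq hUcv hPUp.1 hPUp.2 z hzU
  -- key norm inequalities
  have key1 : ‖p - z‖ ^ 2 ≤ ‖x - z‖ ^ 2 - ‖x - p‖ ^ 2 := by
    have expand : ‖x - z‖ ^ 2 = ‖x - p‖ ^ 2 + 2 * ⟪x - p, p - z⟫ + ‖p - z‖ ^ 2 := by
      have : x - z = (x - p) + (p - z) := by abel
      rw [this, norm_add_sq_real]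
    have : ⟪x - p, p - z⟫ ≥ 0 := by
      have : ⟪x - p, p - z⟫ = - ⟪x - p, z - p⟫ := by
        rw [← inner_neg_right]; congr 1; abel
      linarith [this ▸ neg_nonneg.mpr hvi1]
    linarith
  have key2 : ‖q - z‖ ^ 2 ≤ ‖p - z‖ ^ 2 := by
    have expand : ‖p - z‖ ^ 2 = ‖p - q‖ ^ 2 + 2 * ⟪p - q, q - z⟫ + ‖q - z‖ ^ 2 := by
      have : p - z = (p - q) + (q - z) := by abel
      rw [this, norm_add_sq_real]
    have h2 : ⟪p - q, q - z⟫ ≥ 0 := by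
      have : ⟪p - q, q - z⟫ = - ⟪p - q, z - q⟫ := by
        rw [← inner_neg_right]; congr 1; abel
      rw [this]; linarith
    nlinarith [sq_nonneg ‖p - q‖]
  have hdq : Metric.infDist q (K ∩ U) ≤ ‖q - z‖ := by
    simpa [dist_eq_norm] using Metric.infDist_le_dist_of_mem hzKU
  have hdx : Metric.infDist x (K ∩ U) = ‖x - z‖ := by rw [hzd, dist_eq_norm]
  have hLEBx := hLEB x hx
  have h0 : 0 ≤ Metric.infDist x (K ∩ U) := Metric.infDist_nonneg
  have h0q : 0 ≤ Metric.infDist q (K ∩ U) := Metric.infDist_nonneg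
  have hsq : (ω * Metric.infDist x (K ∩ U)) ^ 2 ≤ ‖x - p‖ ^ 2 := by
    rw [← hdSx]
    exact pow_le_pow_left₀ (by positivity) hLEBx 2
  have hq2 : Metric.infDist q (K ∩ U) ^ 2 ≤ ‖q - z‖ ^ 2 :=
    pow_le_pow_left₀ h0q hdq 2
  rw [ge_iff_le]
  calc Metric.infDist q (K ∩ U) ^ 2 ≤ ‖q - z‖ ^ 2 := hq2
    _ ≤ ‖x - z‖ ^ 2 - ‖x - p‖ ^ 2 := le_trans key2 key1
    _ ≤ (1 - ω ^ 2) * Metric.infDist x (K ∩ U) ^ 2 := by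
        rw [← hdx] at *
        nlinarith [hsq]
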